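/- Let (G,H) be dense and let u be a vertex of G. Define D⁺_{G,H}(u) to be the set of values d⁺_O(u) over all orientations O of G such that d⁺_O(x) ∈ H(x) for every vertex x ≠ u. Then D⁺_{G,H}(u) is nonempty. -/

import Mathlib

/-- An orientation of a graph: each edge is assigned a source endpoint. -/
structure GOrientation {V : Type*} (G : SimpleGraph V) where
  src : Sym2 V → V
  mem : ∀ e ∈ G.edgeSet, src e ∈ e

/-- Out-degree of `v` under orientation `O`: number of edges whose source is `v`. -/
noncomputable def outDeg {V : Type*} {G : SimpleGraph V} (O : GOrientation G) (v : V) : ℕ :=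
  Set.ncard {e ∈ G.edgeSet | O.src e = v}

/-- Degree of a vertex. -/
noncomputable def deg {V : Type*} (G : SimpleGraph V) (v : V) : ℕ :=
  (G.neighborSet v).ncard

/-- The pair `(G, H)` is dense: `G` is connected and `i ∉ H v → i+1 ∈ H v`. -/
def DensePair {V : Type*} (G : SimpleGraph V) (H : V → Set ℕ) : Prop :=
  G.Connected ∧ ∀ v : V, ∀ i : ℕ, i ∉ H v → i + 1 ∈ H v

/-- `D⁺_{G,H}(u)`: possible out-degrees of `u` over orientations feasible away from `u`. -/
noncomputable def Dset {V : Type*} (G : SimpleGraph V) (H : V → Set ℕ) (u : V) : Set ℕ :=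
  {d | ∃ O : GOrientation G, (∀ x, x ≠ u → outDeg O x ∈ H x) ∧ outDeg O u = d}

/-- `x` is a cut vertex: `G` is connected but `G - x` is not. -/
def IsCutVertex {V : Type*} (G : SimpleGraph V) (x : V) : Prop :=
  G.Connected ∧ ¬ (G.induce ({x}ᶜ : Set V)).Connected


lemma exists_step {V : Type*} (G : SimpleGraph V) (hG : G.Connected) (u x : V) (hx : x ≠ u) :
    ∃ q, G.Adj x q ∧ G.dist q u < G.dist x u := by
  obtain ⟨w, hw⟩ := (hG x u).exists_walk_length_eq_dist
  have hpos : 0 < G.dist x u := hG.pos_dist_of_ne hx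
  cases w with
  | nil => exact absurd rfl hx
  | cons h w' =>
    refine ⟨_, h, ?_⟩
    have h2 := SimpleGraph.dist_le w'
    simp [SimpleGraph.Walk.length_cons] at hw
    omega

open Classical in
noncomputable def pfn {V : Type*} (G : SimpleGraph V) (hG : G.Connected) (u x : V) : V :=
  if hx : x ≠ u then (exists_step G hG u x hx).choose else x

open Classical in
lemma pfn_adj {V : Type*} (G : SimpleGraph V) (hG : G.Connected) (u x : V) (hx : x ≠ u) :
    G.Adj x (pfn G hG u x) := by
  rw [pfn, dif_pos hx]; exact (exists_step G hG u x hx).choose_spec.1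

open Classical in
lemma pfn_dist {V : Type*} (G : SimpleGraph V) (hG : G.Connected) (u x : V) (hx : x ≠ u) :
    G.dist (pfn G hG u x) u < G.dist x u := by
  rw [pfn, dif_pos hx]; exact (exists_step G hG u x hx).choose_spec.2

noncomputable def tE {V : Type*} (G : SimpleGraph V) (hG : G.Connected) (u x : V) : Sym2 V :=
  s(x, pfn G hG u x)

lemma tE_mem_edgeSet {V : Type*} (G : SimpleGraph V) (hG : G.Connected) (u x : V) (hx : x ≠ u) :
    tE G hG u x ∈ G.edgeSet := by
  rw [tE, SimpleGraph.mem_edgeSet]; exact pfn_adj G hG u x hx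

lemma tE_inj {V : Type*} (G : SimpleGraph V) (hG : G.Connected) (u : V) {x y : V}
    (hx : x ≠ u) (hy : y ≠ u) (h : tE G hG u x = tE G hG u y) : x = y := by
  rw [tE, tE, Sym2.eq_iff] at h
  rcases h with ⟨h1, _⟩ | ⟨h1, h2⟩
  · exact h1
  · exfalso
    have d1 := pfn_dist G hG u x hx
    have d2 := pfn_dist G hG u y hy
    rw [← h1] at d2
    rw [h2] at d1
    omega

noncomputable def baseSet {V : Type*} (G : SimpleGraph V) (hG : G.Connected) (u x : V) :
    Set (Sym2 V) :=
  {e | e ∈ G.edgeSet ∧ (¬ ∃ y, y ≠ u ∧ e = tE G hG u y) ∧ e.out.1 = x}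

open Classical in
noncomputable def cfn {V : Type*} [Fintype V] (G : SimpleGraph V) (hG : G.Connected) (u : V)
    (H : V → Set ℕ) (x : V) : Bool :=
  if (baseSet G hG u x ∪ (tE G hG u) ''
      {y | ∃ _h : y ≠ u ∧ pfn G hG u y = x, cfn G hG u H y = false}).ncard ∈ H x
  then false else true
termination_by (Finset.univ.sup fun v => G.dist v u) + 1 - G.dist x u
decreasing_by
  all_goals
  obtain ⟨hy, hpy⟩ := _h
  have h1 : G.dist x u < G.dist y u := by
    have := pfn_dist G hG u y hy; rw [hpy] at this; omega
  have h2 : G.dist x u ≤ Finset.univ.sup fun v => G.dist v u :=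
    Finset.le_sup (f := fun v => G.dist v u) (Finset.mem_univ x)
  omega

noncomputable def childSet {V : Type*} [Fintype V] (G : SimpleGraph V) (hG : G.Connected)
    (u : V) (H : V → Set ℕ) (x : V) : Set (Sym2 V) :=
  (tE G hG u) '' {y | y ≠ u ∧ pfn G hG u y = x ∧ cfn G hG u H y = false}

open Classical in
lemma cfn_eq {V : Type*} [Fintype V] (G : SimpleGraph V) (hG : G.Connected) (u : V)
    (H : V → Set ℕ) (x : V) :
    cfn G hG u H x =
      if (baseSet G hG u x ∪ childSet G hG u H x).ncard ∈ H x then false else true := by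
  conv_lhs => rw [cfn]
  rw [childSet]
  have : {y | ∃ _h : y ≠ u ∧ pfn G hG u y = x, cfn G hG u H y = false}
      = {y | y ≠ u ∧ pfn G hG u y = x ∧ cfn G hG u H y = false} := by
    ext y; simp [and_assoc]
  rw [this]

open Classical in
noncomputable def src0 {V : Type*} [Fintype V] (G : SimpleGraph V) (hG : G.Connected) (u : V)
    (H : V → Set ℕ) (e : Sym2 V) : V :=
  if h : ∃ x, x ≠ u ∧ e = tE G hG u x then
    (if cfn G hG u H h.choose then h.choose else pfn G hG u h.choose)
  else e.out.1

lemma src0_tree {V : Type*} [Fintype V] (G : SimpleGraph V) (hG : G.Connected) (u : V)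
    (H : V → Set ℕ) (x : V) (hx : x ≠ u) :
    src0 G hG u H (tE G hG u x) = if cfn G hG u H x then x else pfn G hG u x := by
  rw [src0]
  have h : ∃ y, y ≠ u ∧ tE G hG u x = tE G hG u y := ⟨x, hx, rfl⟩
  rw [dif_pos h]
  have hc := h.choose_spec
  have hcx : h.choose = x := tE_inj G hG u hc.1 hx hc.2.symm
  rw [hcx]

lemma src0_mem {V : Type*} [Fintype V] (G : SimpleGraph V) (hG : G.Connected) (u : V)
    (H : V → Set ℕ) (e : Sym2 V) (_he : e ∈ G.edgeSet) : src0 G hG u H e ∈ e := by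
  by_cases h : ∃ x, x ≠ u ∧ e = tE G hG u x
  · obtain ⟨x, hx, rfl⟩ := h
    rw [src0_tree G hG u H x hx, tE]
    split <;> simp
  · rw [src0, dif_neg h]
    exact Sym2.out_fst_mem e

lemma key {V : Type*} [Fintype V] (G : SimpleGraph V) (hG : G.Connected) (u : V)
    (H : V → Set ℕ) (x : V) (hx : x ≠ u) :
    {e | e ∈ G.edgeSet ∧ src0 G hG u H e = x} =
      (baseSet G hG u x ∪ childSet G hG u H x) ∪
        (if cfn G hG u H x then {tE G hG u x} else ∅) := by
  ext e
  constructor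
  · rintro ⟨he, hsrc⟩
    rw [src0] at hsrc
    by_cases h : ∃ y, y ≠ u ∧ e = tE G hG u y
    · rw [dif_pos h] at hsrc
      have hc := h.choose_spec
      by_cases hb : cfn G hG u H h.choose
      · rw [if_pos hb] at hsrc
        right
        rw [hsrc] at hb hc
        rw [if_pos hb, hc.2]
        rfl
      · rw [if_neg hb] at hsrc
        left; right
        exact ⟨h.choose, ⟨hc.1, hsrc, Bool.eq_false_iff.mpr hb⟩, hc.2.symm⟩
    · rw [dif_neg h] at hsrc
      exact Or.inl (Or.inl ⟨he, h, hsrc⟩)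
  · rintro ((⟨he, hno, hout⟩ | ⟨y, ⟨hy, hpy, hcy⟩, rfl⟩) | hif)
    · refine ⟨he, ?_⟩
      rw [src0, dif_neg hno]; exact hout
    · refine ⟨tE_mem_edgeSet G hG u y hy, ?_⟩
      rw [src0_tree G hG u H y hy, hcy]
      simpa using hpy
    · by_cases hb : cfn G hG u H x
      · rw [if_pos hb] at hif
        rw [Set.mem_singleton_iff] at hif
        subst hif
        exact ⟨tE_mem_edgeSet G hG u x hx, by rw [src0_tree G hG u H x hx, if_pos hb]⟩
      · rw [if_neg hb] at hif
        exact absurd hif (Set.notMem_empty _)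

lemma tE_not_mem {V : Type*} [Fintype V] (G : SimpleGraph V) (hG : G.Connected) (u : V)
    (H : V → Set ℕ) (x : V) (hx : x ≠ u) :
    tE G hG u x ∉ baseSet G hG u x ∪ childSet G hG u H x := by
  rintro (⟨-, hno, -⟩ | ⟨y, ⟨hy, hpy, -⟩, hey⟩)
  · exact hno ⟨x, hx, rfl⟩
  · have : y = x := tE_inj G hG u hy hx hey
    subst this
    exact (pfn_adj G hG u y hy).ne' hpy

open Classical in
lemma outDeg_in {V : Type*} [Fintype V] (G : SimpleGraph V) (hG : G.Connected) (u : V)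
    (H : V → Set ℕ) (hden : ∀ v : V, ∀ i : ℕ, i ∉ H v → i + 1 ∈ H v)
    (O : GOrientation G) (hO : O.src = src0 G hG u H) (x : V) (hx : x ≠ u) :
    outDeg O x ∈ H x := by
  haveI : Finite (Sym2 V) := Finite.of_surjective _ Quot.mk_surjective
  have hset : {e ∈ G.edgeSet | O.src e = x} = {e | e ∈ G.edgeSet ∧ src0 G hG u H e = x} := by
    rw [hO]
  rw [outDeg, hset, key G hG u H x hx]
  by_cases hb : cfn G hG u H x
  · rw [if_pos hb, Set.union_singleton,
      Set.ncard_insert_of_notMem (tE_not_mem G hG u H x hx) (Set.toFinite _)]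
    have hm : (baseSet G hG u x ∪ childSet G hG u H x).ncard ∉ H x := by
      intro hm
      rw [cfn_eq, if_pos hm] at hb
      simp at hb
    exact hden x _ hm
  · rw [if_neg hb, Set.union_empty]
    by_contra hm
    rw [cfn_eq, if_neg hm] at hb
    simp at hb

theorem stmt2 {V : Type*} [Fintype V] (G : SimpleGraph V) (H : V → Set ℕ)
    (hd : DensePair G H) (u : V) :
    (Dset G H u).Nonempty := by
  obtain ⟨hG, hden⟩ := hd
  refine ⟨outDeg (⟨src0 G hG u H, src0_mem G hG u H⟩ : GOrientation G) u,
    ⟨src0 G hG u H, src0_mem G hG u H⟩, fun x hx => ?_, rfl⟩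
  exact outDeg_in G hG u H hden _ rfl x hx
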